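/- Let f : ℝ → ℝ be continuous with f(μ)/μ → c₊ as μ → +∞ where c₊ < 0, and suppose f(0) > 0. Then for every sufficiently large α > 0 there exist at least two distinct points μ > 0 with f(μ) = -(μ/α)². More precisely, there exists α₀ > 0 such that for all α > α₀ the equation f(μ) = -(μ/α)² has at least two solutions in (0, ∞). -/
import Mathlib


open Filter

/-- if `f` is continuous, `f(0) > 0`, and `f(μ)/μ → cp < 0` as
`μ → +∞`, then for all sufficiently large `α > 0` the equation
`f(μ) = -(μ/α)²` has at least two solutions in `(0, ∞)`. -/
theorem stmt4 (f : ℝ → ℝ) (hf : Continuous f) (cp : ℝ) (hc : cp < 0)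
    (hlim : Tendsto (fun μ => f μ / μ) atTop (nhds cp)) (h0 : 0 < f 0) :
    ∃ α₀ > (0 : ℝ), ∀ α > α₀, ∃ μ₁ μ₂ : ℝ, 0 < μ₁ ∧ 0 < μ₂ ∧ μ₁ ≠ μ₂ ∧
      f μ₁ = -(μ₁ / α) ^ 2 ∧ f μ₂ = -(μ₂ / α) ^ 2 := by
  -- get M > 0 with f μ / μ < cp/2 for μ ≥ M
  have hev : ∀ᶠ μ in atTop, f μ / μ < cp / 2 := by
    have : cp < cp / 2 := by linarith
    exact hlim.eventually_lt_const this
  have hev' : ∀ᶠ μ in atTop, 2 * cp < f μ / μ := by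
    have : 2 * cp < cp := by linarith
    exact hlim.eventually_const_lt this
  obtain ⟨M₀, hM₀⟩ := eventually_atTop.mp (hev.and hev')
  set M : ℝ := max M₀ 1 with hMdef
  have hM1 : (1:ℝ) ≤ M := le_max_right _ _
  have hMpos : 0 < M := lt_of_lt_of_le one_pos hM1
  have hdiv : ∀ μ ≥ M, f μ / μ < cp / 2 := fun μ hμ =>
    (hM₀ μ (le_trans (le_max_left _ _) hμ)).1
  have hdiv' : ∀ μ ≥ M, 2 * cp < f μ / μ := fun μ hμ =>
    (hM₀ μ (le_trans (le_max_left _ _) hμ)).2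
  have hfM : f M < cp / 2 * M := by
    have := hdiv M le_rfl
    rwa [div_lt_iff₀ hMpos] at this
  have hfMneg : f M < 0 := lt_trans hfM (by nlinarith)
  set α₀ : ℝ := M / Real.sqrt (-f M) with hα₀def
  have hsq : 0 < Real.sqrt (-f M) := Real.sqrt_pos.mpr (by linarith)
  have hα₀pos : 0 < α₀ := div_pos hMpos hsq
  refine ⟨α₀, hα₀pos, fun α hα => ?_⟩
  have hαpos : 0 < α := lt_trans hα₀pos hα
  set g : ℝ → ℝ := fun μ => f μ + (μ / α) ^ 2 with hg
  have hgc : Continuous g := hf.add ((continuous_id.div_const α).pow 2)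
  have hg0 : 0 < g 0 := by simp [hg, h0]
  -- g M < 0
  have hMα : (M / α) ^ 2 < -f M := by
    have h1 : M / α < Real.sqrt (-f M) := by
      rw [div_lt_iff₀ hαpos]
      calc M = α₀ * Real.sqrt (-f M) := by
              rw [hα₀def, div_mul_cancel₀ _ (ne_of_gt hsq)]
        _ < α * Real.sqrt (-f M) := by
              exact mul_lt_mul_of_pos_right hα hsq
        _ = Real.sqrt (-f M) * α := mul_comm _ _
    have h2 : 0 ≤ M / α := le_of_lt (div_pos hMpos hαpos)
    calc (M / α) ^ 2 < Real.sqrt (-f M) ^ 2 := by nlinarith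
      _ = -f M := Real.sq_sqrt (by linarith)
  have hgM : g M < 0 := by simp only [hg]; linarith
  -- large N with g N > 0
  set N : ℝ := max M (-2 * cp * α ^ 2) + 1 with hN
  have hNM : M < N := lt_of_le_of_lt (le_max_left _ _) (lt_add_one _)
  have hNpos : 0 < N := lt_trans hMpos hNM
  have hNbig : -2 * cp * α ^ 2 < N := lt_of_le_of_lt (le_max_right _ _) (lt_add_one _)
  have hfN : 2 * cp * N < f N := by
    have := hdiv' N (le_of_lt hNM)
    rwa [lt_div_iff₀ hNpos] at this
  have hgN : 0 < g N := by
    have hα2 : 0 < α ^ 2 := pow_pos hαpos 2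
    have h3 : -2 * cp * N < N ^ 2 / α ^ 2 := by
      rw [lt_div_iff₀ hα2]
      nlinarith
    have h4 : (N / α) ^ 2 = N ^ 2 / α ^ 2 := div_pow N α 2
    simp only [hg]
    nlinarith [mul_pos (neg_pos.mpr hc) hNpos]
  -- first root in (0, M)
  have hroot1 : (0:ℝ) ∈ g '' Set.Ioo 0 M :=
    intermediate_value_Ioo' (le_of_lt hMpos) hgc.continuousOn ⟨hgM, hg0⟩
  obtain ⟨μ₁, hμ₁mem, hμ₁⟩ := hroot1
  -- second root in (M, N)
  have hroot2 : (0:ℝ) ∈ g '' Set.Ioo M N :=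
    intermediate_value_Ioo (le_of_lt hNM) hgc.continuousOn ⟨hgM, hgN⟩
  obtain ⟨μ₂, hμ₂mem, hμ₂⟩ := hroot2
  refine ⟨μ₁, μ₂, hμ₁mem.1, lt_trans hMpos hμ₂mem.1,
    ne_of_lt (lt_trans hμ₁mem.2 hμ₂mem.1), ?_, ?_⟩
  · simp only [hg] at hμ₁; linarith
  · simp only [hg] at hμ₂; linarith
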